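/- Let Ω ⊆ ℝ^n be measurable, 0 < α < n, and for x ∈ Ω let Λ_Ω(x,r) = |Ω ∩ B(x,r)| and let k*(x,·) be the nonincreasing rearrangement of y ↦ |x−y|^{α−n} over Ω. If λ(1) := sup_{x∈Ω} |Ω ∩ B(x,1)| (essentially), then ∫_{λ(1)}^∞ (k*(x,t))^{n/(n−α)} dt ≤ n ∫_1^∞ Λ_Ω(x,r) r^{−n−1} dr for a.e. x ∈ Ω. -/

import Mathlib

open MeasureTheory Set Metric ENNReal

private lemma subst_rpow (c : ℝ) (hc : c < 0) (g : ℝ → ℝ≥0∞) :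
    ∫⁻ s in Ioi (0:ℝ), g s =
      ∫⁻ r in Ioi (0:ℝ), ENNReal.ofReal |c * r ^ (c - 1)| * g (r ^ c) := by
  have hc0 : c ≠ 0 := ne_of_lt hc
  have himg : (fun r : ℝ => r ^ c) '' Ioi 0 = Ioi 0 := by
    ext s
    simp only [mem_image, mem_Ioi]
    constructor
    · rintro ⟨r, hr, rfl⟩
      exact Real.rpow_pos_of_pos hr _
    · intro hs
      refine ⟨s ^ c⁻¹, Real.rpow_pos_of_pos hs _, ?_⟩
      rw [← Real.rpow_mul hs.le, inv_mul_cancel₀ hc0, Real.rpow_one]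
  have hinj : InjOn (fun r : ℝ => r ^ c) (Ioi 0) := by
    have : StrictAntiOn (fun r : ℝ => r ^ c) (Ioi 0) :=
      fun a ha b hb hab => Real.rpow_lt_rpow_of_neg ha hab hc
    exact this.injOn
  have hder : ∀ r ∈ Ioi (0:ℝ), HasFDerivWithinAt (fun r : ℝ => r ^ c)
      ((1 : ℝ →L[ℝ] ℝ).smulRight (c * r ^ (c - 1))) (Ioi 0) r := by
    intro r hr
    exact ((Real.hasDerivAt_rpow_const (Or.inl (ne_of_gt hr))).hasDerivWithinAt).hasFDerivWithinAt
  have := lintegral_image_eq_lintegral_abs_det_fderiv_mul volume measurableSet_Ioi hder hinj g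
  rw [himg] at this
  rw [this]
  apply lintegral_congr
  intro r
  rw [ContinuousLinearMap.det_smulRight, ContinuousLinearMap.one_apply, one_mul]

private lemma superlevel_subset {n : ℕ} {α : ℝ} (hα : 0 < α) (hαn : α < n)
    (Ω : Set (EuclideanSpace ℝ (Fin n))) (x : EuclideanSpace ℝ (Fin n))
    {r : ℝ} (hr : 0 < r) :
    {y | y ∈ Ω ∧ r ^ (α - (n:ℝ)) < ‖x - y‖ ^ (α - (n:ℝ))} ⊆ Ω ∩ ball x r := by
  have hc : α - (n:ℝ) < 0 := sub_neg.mpr hαn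
  rintro y ⟨hyΩ, hlt⟩
  refine ⟨hyΩ, ?_⟩
  rcases eq_or_ne (‖x - y‖) 0 with h0 | h0
  · rw [h0, Real.zero_rpow (ne_of_lt hc)] at hlt
    exact absurd hlt (not_lt.mpr (Real.rpow_pos_of_pos hr _).le)
  · have hd : 0 < ‖x - y‖ := lt_of_le_of_ne (norm_nonneg _) (Ne.symm h0)
    have := (Real.rpow_lt_rpow_iff_of_neg hr hd hc).mp hlt
    rw [mem_ball, dist_eq_norm, ← norm_neg, neg_sub]
    exact this

private lemma k_aemeasurable (D : ℝ → ℝ≥0∞)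
    (hne : ∀ t : ℝ, 0 < t → {s : ℝ | 0 < s ∧ D s ≤ ENNReal.ofReal t}.Nonempty)
    (t0 : ℝ) (ht0 : 0 ≤ t0) :
    AEMeasurable (fun t => sInf {s : ℝ | 0 < s ∧ D s ≤ ENNReal.ofReal t})
      (volume.restrict (Ioi t0)) := by
  set k : ℝ → ℝ := fun t => sInf {s : ℝ | 0 < s ∧ D s ≤ ENNReal.ofReal t} with hk
  have hbdd : ∀ t : ℝ, BddBelow {s : ℝ | 0 < s ∧ D s ≤ ENNReal.ofReal t} :=
    fun t => ⟨0, fun s hs => hs.1.le⟩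
  have hanti : ∀ {t1 t2 : ℝ}, 0 < t1 → t1 ≤ t2 → k t2 ≤ k t1 := by
    intro t1 t2 ht1 h
    exact csInf_le_csInf (hbdd _) (hne _ ht1)
      (fun s hs => ⟨hs.1, hs.2.trans (ENNReal.ofReal_le_ofReal h)⟩)
  have hsub : AEMeasurable k (volume.restrict (Ioi (0:ℝ))) := by
    have hI : Ioi (0:ℝ) = ⋃ m : ℕ, Ioi (1/(m+1) : ℝ) := by
      ext t
      simp only [mem_iUnion, mem_Ioi]
      constructor
      · intro ht
        obtain ⟨m, hm⟩ := exists_nat_one_div_lt ht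
        exact ⟨m, hm⟩
      · rintro ⟨m, hm⟩
        exact lt_trans (by positivity) hm
    rw [hI, aemeasurable_iUnion_iff]
    intro m
    have ha : (0:ℝ) < 1/(m+1) := by positivity
    have hk' : Antitone (fun t => k (max t (1/(m+1):ℝ))) := fun t1 t2 h =>
      hanti (lt_of_lt_of_le ha (le_max_right _ _)) (max_le_max h le_rfl)
    refine (hk'.measurable.aemeasurable).congr ?_
    filter_upwards [self_mem_ae_restrict (measurableSet_Ioi :
      MeasurableSet (Ioi (1/(m+1):ℝ)))] with t ht
    show k (max t (1/(m+1):ℝ)) = k t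
    rw [max_eq_left (le_of_lt ht)]
  exact hsub.mono_measure (Measure.restrict_mono (Ioi_subset_Ioi ht0) le_rfl)

theorem stmt_6 (n : ℕ) (hn : 0 < n) (α : ℝ) (hα : 0 < α) (hαn : α < n)
    (Ω : Set (EuclideanSpace ℝ (Fin n))) (hΩ : MeasurableSet Ω) :
    ∀ᵐ x ∂(volume.restrict Ω),
      (∫⁻ t in Ioi ((essSup (fun x : EuclideanSpace ℝ (Fin n) =>
            volume (Ω ∩ ball x 1)) (volume.restrict Ω)).toReal),
          ENNReal.ofReal
            ((sInf {s : ℝ | 0 < s ∧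
                volume {y | y ∈ Ω ∧ s < ‖x - y‖ ^ (α - (n : ℝ))} ≤ ENNReal.ofReal t})
              ^ ((n : ℝ) / ((n : ℝ) - α))))
        ≤ (n : ℝ≥0∞) *
            ∫⁻ r in Ioi (1 : ℝ),
              volume (Ω ∩ ball x r) * ENNReal.ofReal (r ^ (-(n : ℝ) - 1)) := by
  have hn' : (0:ℝ) < n := by exact_mod_cast hn
  have hnα : (0:ℝ) < (n:ℝ) - α := sub_pos.mpr hαn
  set c : ℝ := α - (n:ℝ) with hc_def
  have hc : c < 0 := sub_neg.mpr hαn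
  have hc0 : c ≠ 0 := ne_of_lt hc
  set p : ℝ := (n:ℝ) / ((n:ℝ) - α) with hp_def
  have hp : 0 < p := div_pos hn' hnα
  set T := essSup (fun x : EuclideanSpace ℝ (Fin n) =>
    volume (Ω ∩ ball x 1)) (volume.restrict Ω) with hT
  have hTfin : T ≠ ∞ := by
    refine ne_top_of_le_ne_top
      (show volume (ball (0 : EuclideanSpace ℝ (Fin n)) 1) ≠ ⊤ from measure_ball_lt_top.ne) ?_
    refine essSup_le_of_ae_le _ (Filter.Eventually.of_forall fun x => ?_)
    calc volume (Ω ∩ ball x 1) ≤ volume (ball x 1) := measure_mono inter_subset_right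
      _ = volume (ball (0 : EuclideanSpace ℝ (Fin n)) 1) := by
          rw [Measure.addHaar_ball_center]
  set t0 := T.toReal with ht0_def
  have ht0 : 0 ≤ t0 := ENNReal.toReal_nonneg
  filter_upwards [ae_le_essSup
    (fun x : EuclideanSpace ℝ (Fin n) => volume (Ω ∩ ball x 1))] with x hx
  -- abbreviations (pointwise in x)
  have hLamfin : ∀ r : ℝ, volume (Ω ∩ ball x r) ≠ ∞ := fun r =>
    ne_top_of_le_ne_top (measure_ball_lt_top).ne (measure_mono inter_subset_right)
  have hDmeas : ∀ u : ℝ, MeasurableSet {y | y ∈ Ω ∧ u < ‖x - y‖ ^ c} := by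
    intro u
    have hg : Measurable fun y : EuclideanSpace ℝ (Fin n) => ‖x - y‖ ^ c :=
      ((continuous_const.sub continuous_id).norm.measurable).pow measurable_const
    exact hΩ.inter (measurableSet_lt measurable_const hg)
  have hDle : ∀ u : ℝ, 0 < u →
      volume {y | y ∈ Ω ∧ u < ‖x - y‖ ^ c} ≤ volume (Ω ∩ ball x (u ^ c⁻¹)) := by
    intro u hu
    have hru : (0:ℝ) < u ^ c⁻¹ := Real.rpow_pos_of_pos hu _
    have heq : (u ^ c⁻¹) ^ c = u := by
      rw [← Real.rpow_mul hu.le, inv_mul_cancel₀ hc0, Real.rpow_one]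
    refine measure_mono ?_
    have := superlevel_subset hα hαn Ω x hru
    rw [← hc_def, heq] at this
    exact this
  -- nonemptiness of the sets defining k
  have hne : ∀ t : ℝ, 0 < t →
      {s : ℝ | 0 < s ∧ volume {y | y ∈ Ω ∧ s < ‖x - y‖ ^ c} ≤ ENNReal.ofReal t}.Nonempty := by
    intro t ht
    have htend : Filter.Tendsto
        (fun m : ℕ => volume {y | y ∈ Ω ∧ ((m:ℝ)+1) < ‖x - y‖ ^ c})
        Filter.atTop (nhds 0) := by
      have hInter : (⋂ m : ℕ, {y | y ∈ Ω ∧ ((m:ℝ)+1) < ‖x - y‖ ^ c}) = ∅ := by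
        ext y
        simp only [mem_iInter, mem_setOf_eq, mem_empty_iff_false, iff_false, not_forall]
        by_contra h
        push_neg at h
        obtain ⟨m, hm⟩ := exists_nat_gt (‖x - y‖ ^ c)
        exact absurd ((h m).2) (not_lt.mpr (by linarith))
      have := tendsto_measure_iInter_atTop
        (μ := volume) (s := fun m : ℕ => {y | y ∈ Ω ∧ ((m:ℝ)+1) < ‖x - y‖ ^ c})
        (fun m => (hDmeas _).nullMeasurableSet)
        (fun m₁ m₂ h y hy => ⟨hy.1, lt_of_le_of_lt (by
          simp only [add_le_add_iff_right, Nat.cast_le]; exact h) hy.2⟩)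
        ⟨0, ne_top_of_le_ne_top (hLamfin _) (hDle _ (by positivity))⟩
      rw [hInter] at this
      rw [measure_empty] at this
      exact this
    have hev := htend.eventually_lt_const (show (0:ℝ≥0∞) < ENNReal.ofReal t from
      ENNReal.ofReal_pos.mpr ht)
    obtain ⟨m, hm⟩ := hev.exists
    exact ⟨(m:ℝ)+1, by positivity, hm.le⟩
  -- the rearrangement function
  set k : ℝ → ℝ := fun t => sInf {s : ℝ | 0 < s ∧
    volume {y | y ∈ Ω ∧ s < ‖x - y‖ ^ c} ≤ ENNReal.ofReal t} with hk_def
  have hbdd : ∀ t : ℝ, BddBelow {s : ℝ | 0 < s ∧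
      volume {y | y ∈ Ω ∧ s < ‖x - y‖ ^ c} ≤ ENNReal.ofReal t} :=
    fun t => ⟨0, fun s hs => hs.1.le⟩
  have hk_nonneg : ∀ t : ℝ, 0 ≤ k t :=
    fun t => Real.sInf_nonneg (fun s hs => hs.1.le)
  have hk_meas : AEMeasurable k (volume.restrict (Ioi t0)) :=
    k_aemeasurable (fun u => volume {y | y ∈ Ω ∧ u < ‖x - y‖ ^ c}) hne t0 ht0
  -- the layer cake formula
  have key := lintegral_rpow_eq_lintegral_meas_lt_mul (volume.restrict (Ioi t0))
    (Filter.Eventually.of_forall hk_nonneg) hk_meas hp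
  refine key.trans_le ?_
  -- bound the superlevel-measure term
  have hB1 : ∀ u : ℝ, 0 < u →
      (volume.restrict (Ioi t0)) {t : ℝ | u < k t} ≤
        ENNReal.ofReal ((volume (Ω ∩ ball x (u ^ c⁻¹))).toReal - t0) := by
    intro u hu
    rw [Measure.restrict_apply' measurableSet_Ioi]
    refine le_trans (measure_mono ?_)
      (le_of_eq (Real.volume_Ioc (a := t0) (b := (volume (Ω ∩ ball x (u ^ c⁻¹))).toReal)))
    rintro t ⟨ht1, ht2⟩
    have htpos : 0 < t := lt_of_le_of_lt ht0 ht2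
    have hDu : ENNReal.ofReal t < volume {y | y ∈ Ω ∧ u < ‖x - y‖ ^ c} := by
      by_contra h
      exact absurd (csInf_le (hbdd t) ⟨hu, not_lt.mp h⟩) (not_le.mpr ht1)
    have : t < (volume (Ω ∩ ball x (u ^ c⁻¹))).toReal :=
      (ENNReal.ofReal_lt_iff_lt_toReal htpos.le (hLamfin _)).mp (hDu.trans_le (hDle u hu))
    exact ⟨ht2, this.le⟩
  refine le_trans (mul_le_mul_right
    (setLIntegral_mono' measurableSet_Ioi (fun u hu =>
      mul_le_mul_left (hB1 u hu) (ENNReal.ofReal (u ^ (p - 1))))) (ENNReal.ofReal p)) ?_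
  -- substitute u = r ^ c
  rw [subst_rpow c hc (fun u => ENNReal.ofReal ((volume (Ω ∩ ball x (u ^ c⁻¹))).toReal - t0) *
    ENNReal.ofReal (u ^ (p - 1)))]
  rw [setLIntegral_congr_fun measurableSet_Ioi (
    (fun (r : ℝ) (hr : r ∈ Ioi (0:ℝ)) => by
      have hr0 : (0:ℝ) < r := hr
      have heq : (r ^ c) ^ c⁻¹ = r := by
        rw [← Real.rpow_mul hr0.le, mul_inv_cancel₀ hc0, Real.rpow_one]
      rw [heq]))]
  -- split the integration domain at 1
  rw [← lintegral_const_mul' (ENNReal.ofReal p) _ ENNReal.ofReal_ne_top,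
    ← Ioc_union_Ioi_eq_Ioi (zero_le_one (α := ℝ)),
    lintegral_union measurableSet_Ioi (Ioc_disjoint_Ioi le_rfl)]
  have hzero : ∫⁻ r in Ioc (0:ℝ) 1,
      ENNReal.ofReal p * (ENNReal.ofReal |c * r ^ (c - 1)| *
        (ENNReal.ofReal ((volume (Ω ∩ ball x r)).toReal - t0) *
          ENNReal.ofReal ((r ^ c) ^ (p - 1)))) = 0 := by
    refine le_antisymm (le_trans (setLIntegral_mono' (g := fun _ => (0:ℝ≥0∞))
      measurableSet_Ioc (fun r hr => ?_)) (by simp)) zero_le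
    have hΛ : volume (Ω ∩ ball x r) ≤ T :=
      le_trans (measure_mono (inter_subset_inter le_rfl (ball_subset_ball hr.2))) hx
    have : (volume (Ω ∩ ball x r)).toReal - t0 ≤ 0 :=
      sub_nonpos.mpr (ENNReal.toReal_mono hTfin hΛ)
    rw [ENNReal.ofReal_eq_zero.mpr this, zero_mul, mul_zero, mul_zero]
  rw [hzero, zero_add]
  -- final bound on Ioi 1
  refine le_trans (setLIntegral_mono'
    (g := fun r => (n : ℝ≥0∞) * (volume (Ω ∩ ball x r) * ENNReal.ofReal (r ^ (-(n:ℝ) - 1))))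
    measurableSet_Ioi (fun r hr => ?_)) ?_
  · -- pointwise bound for r > 1
    show ENNReal.ofReal p * (ENNReal.ofReal |c * r ^ (c - 1)| *
        (ENNReal.ofReal ((volume (Ω ∩ ball x r)).toReal - t0) *
          ENNReal.ofReal ((r ^ c) ^ (p - 1)))) ≤
      (n : ℝ≥0∞) * (volume (Ω ∩ ball x r) * ENNReal.ofReal (r ^ (-(n:ℝ) - 1)))
    have hr0 : (0:ℝ) < r := lt_trans one_pos hr
    have habs : |c * r ^ (c - 1)| = (-c) * r ^ (c - 1) := by
      rw [abs_of_neg (mul_neg_of_neg_of_pos hc (Real.rpow_pos_of_pos hr0 _)), neg_mul]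
    have hexp : (r ^ c) ^ (p - 1) = r ^ (c * (p - 1)) := by
      rw [← Real.rpow_mul hr0.le]
    have hcoef : p * ((-c) * r ^ (c - 1)) * r ^ (c * (p - 1)) = (n:ℝ) * r ^ (-(n:ℝ) - 1) := by
      have hcp : c * p = -(n:ℝ) := by
        rw [hc_def, hp_def]
        field_simp
        ring
      have hpc : p * (-c) = (n:ℝ) := by
        rw [hc_def, hp_def]
        field_simp
        ring
      have hmulr : r ^ (c - 1) * r ^ (c * (p - 1)) = r ^ (c * p - 1) := by
        rw [← Real.rpow_add hr0, show c - 1 + c * (p - 1) = c * p - 1 from by ring]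
      calc p * (-c * r ^ (c - 1)) * r ^ (c * (p - 1))
          = (p * -c) * (r ^ (c - 1) * r ^ (c * (p - 1))) := by ring
        _ = (n:ℝ) * r ^ (c * p - 1) := by rw [hpc, hmulr]
        _ = (n:ℝ) * r ^ (-(n:ℝ) - 1) := by rw [hcp]
    have hsub : ENNReal.ofReal ((volume (Ω ∩ ball x r)).toReal - t0) ≤
        volume (Ω ∩ ball x r) := by
      refine le_trans (ENNReal.ofReal_le_ofReal (sub_le_self _ ht0)) ?_
      rw [ENNReal.ofReal_toReal (hLamfin r)]
    calc ENNReal.ofReal p * (ENNReal.ofReal |c * r ^ (c - 1)| *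
          (ENNReal.ofReal ((volume (Ω ∩ ball x r)).toReal - t0) *
            ENNReal.ofReal ((r ^ c) ^ (p - 1))))
        = (ENNReal.ofReal p * ENNReal.ofReal |c * r ^ (c - 1)| *
            ENNReal.ofReal ((r ^ c) ^ (p - 1))) *
          ENNReal.ofReal ((volume (Ω ∩ ball x r)).toReal - t0) := by ring
      _ = ENNReal.ofReal (p * |c * r ^ (c - 1)| * ((r ^ c) ^ (p - 1))) *
          ENNReal.ofReal ((volume (Ω ∩ ball x r)).toReal - t0) := by
            rw [← ENNReal.ofReal_mul hp.le, ← ENNReal.ofReal_mul (by positivity)]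
      _ = ENNReal.ofReal ((n:ℝ) * r ^ (-(n:ℝ) - 1)) *
          ENNReal.ofReal ((volume (Ω ∩ ball x r)).toReal - t0) := by
            rw [habs, hexp, hcoef]
      _ = ((n:ℝ≥0∞) * ENNReal.ofReal (r ^ (-(n:ℝ) - 1))) *
          ENNReal.ofReal ((volume (Ω ∩ ball x r)).toReal - t0) := by
            rw [ENNReal.ofReal_mul (by positivity), ENNReal.ofReal_natCast]
      _ ≤ ((n:ℝ≥0∞) * ENNReal.ofReal (r ^ (-(n:ℝ) - 1))) * volume (Ω ∩ ball x r) :=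
            mul_le_mul_right hsub _
      _ = (n : ℝ≥0∞) * (volume (Ω ∩ ball x r) * ENNReal.ofReal (r ^ (-(n:ℝ) - 1))) := by
            ring
  · rw [lintegral_const_mul' (n : ℝ≥0∞) _ (ENNReal.natCast_ne_top n)]
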